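/- (Root lemma from the proof of Claim 1.) There exist ε > 0 and a real-analytic function V : (−ε, ε) → ℝ with V(0) = √2 / 2 such that for every x ∈ (−ε, ε), the number y = x³·V(x) satisfies 2y² − (x² − y²)·(x² + y²)² = 0. Moreover, there exists ε' > 0 such that every (x, y) ∈ ℝ² with x² + y² < ε'² and 2y² − (x² − y²)·(x² + y²)² = 0 satisfies y = x³·V(x) or y = −x³·V(x). -/

import Mathlib

noncomputable section RootLemmaClaim1Aux

/-- The rescaled implicit equation. -/
def Fimp : ℝ × ℝ → ℝ := fun p =>
  2 * p.2 ^ 2 - (1 - p.1 ^ 4 * p.2 ^ 2) * (1 + p.1 ^ 4 * p.2 ^ 2) ^ 2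

def Phimp : ℝ × ℝ → ℝ × ℝ := fun p => (p.1, Fimp p)

def aPt : ℝ × ℝ := ((0 : ℝ), Real.sqrt 2 / 2)

lemma analyticAt_Phimp (p : ℝ × ℝ) : AnalyticAt ℝ Phimp p := by
  apply AnalyticAt.prod analyticAt_fst
  unfold Fimp
  apply AnalyticAt.sub
  · exact (analyticAt_const.mul (analyticAt_snd.pow 2))
  · exact ((analyticAt_const.sub ((analyticAt_fst.pow 4).mul (analyticAt_snd.pow 2))).mul
      ((analyticAt_const.add ((analyticAt_fst.pow 4).mul (analyticAt_snd.pow 2))).pow 2))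

lemma sqrt2_half_sq : (Real.sqrt 2 / 2) ^ 2 = 1 / 2 := by
  rw [div_pow, Real.sq_sqrt (by norm_num : (0:ℝ) ≤ 2)]
  norm_num

lemma Fimp_aPt : Fimp aPt = 0 := by
  simp only [Fimp, aPt]
  rw [sqrt2_half_sq]
  ring

def eEquiv : (ℝ × ℝ) ≃L[ℝ] (ℝ × ℝ) :=
  (ContinuousLinearEquiv.refl ℝ ℝ).prodCongr
    (ContinuousLinearEquiv.unitsEquivAut ℝ (Units.mk0 (2 * Real.sqrt 2)
      (by positivity)))

lemma hasFDerivAt_Phimp : HasFDerivAt Phimp (eEquiv : (ℝ × ℝ) →L[ℝ] (ℝ × ℝ)) aPt := by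
  have h1 : HasFDerivAt (fun p : ℝ × ℝ => p.1) (ContinuousLinearMap.fst ℝ ℝ ℝ) aPt :=
    hasFDerivAt_fst
  have h2 : HasFDerivAt (fun p : ℝ × ℝ => p.2) (ContinuousLinearMap.snd ℝ ℝ ℝ) aPt :=
    hasFDerivAt_snd
  have hx4 := ((h1.mul h1).mul h1).mul h1
  have hy2 := h2.mul h2
  have hg := hx4.mul hy2
  have hA := (hasFDerivAt_const (1:ℝ) aPt).sub hg
  have hB := (hasFDerivAt_const (1:ℝ) aPt).add hg
  have hFull := ((hasFDerivAt_const (2:ℝ) aPt).mul hy2).sub (hA.mul (hB.mul hB))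
  have hPhi := h1.prodMk hFull
  have hfun : Phimp = fun p : ℝ × ℝ =>
      (p.1, 2 * (p.2 * p.2) -
        (1 - p.1 * p.1 * p.1 * p.1 * (p.2 * p.2)) *
          ((1 + p.1 * p.1 * p.1 * p.1 * (p.2 * p.2)) *
            (1 + p.1 * p.1 * p.1 * p.1 * (p.2 * p.2)))) := by
    funext p
    exact congrArg (Prod.mk p.1) (by simp only [Fimp]; ring)
  rw [hfun]
  refine hPhi.congr_fderiv ?_
  refine ContinuousLinearMap.ext fun q => ?_
  simp only [aPt, eEquiv, ContinuousLinearEquiv.coe_coe, ContinuousLinearEquiv.prodCongr_apply,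
    ContinuousLinearEquiv.refl_apply, ContinuousLinearEquiv.unitsEquivAut_apply, Units.val_mk0,
    ContinuousLinearMap.prod_apply, ContinuousLinearMap.coe_fst', ContinuousLinearMap.coe_snd',
    ContinuousLinearMap.add_apply, ContinuousLinearMap.sub_apply, ContinuousLinearMap.smul_apply,
    ContinuousLinearMap.coe_smul', Pi.smul_apply, smul_eq_mul, ContinuousLinearMap.zero_apply]
  rw [Prod.mk.injEq]
  exact ⟨rfl, by simp only [Pi.mul_apply, Pi.add_apply, Pi.sub_apply, Pi.pow_apply]; ring⟩


lemma hasStrictFDerivAt_Phimp :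
    HasStrictFDerivAt Phimp (eEquiv : (ℝ × ℝ) →L[ℝ] (ℝ × ℝ)) aPt := by
  have h := (analyticAt_Phimp aPt).hasStrictFDerivAt
  rwa [hasFDerivAt_Phimp.fderiv] at h

/-- The local homeomorphism given by the inverse function theorem. -/
def PhiH : OpenPartialHomeomorph (ℝ × ℝ) (ℝ × ℝ) :=
  hasStrictFDerivAt_Phimp.toOpenPartialHomeomorph Phimp

lemma PhiH_coe : ⇑PhiH = Phimp :=
  hasStrictFDerivAt_Phimp.toOpenPartialHomeomorph_coe

lemma aPt_mem_source : aPt ∈ PhiH.source :=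
  hasStrictFDerivAt_Phimp.mem_toOpenPartialHomeomorph_source

lemma PhiH_aPt : PhiH aPt = ((0:ℝ), (0:ℝ)) := by
  rw [PhiH_coe]
  show (aPt.1, Fimp aPt) = ((0:ℝ), (0:ℝ))
  rw [Fimp_aPt]
  rfl

lemma zero_mem_target : ((0:ℝ), (0:ℝ)) ∈ PhiH.target := by
  rw [← PhiH_aPt]; exact PhiH.map_source aPt_mem_source

lemma analyticAt_symm : AnalyticAt ℝ (⇑PhiH.symm) ((0:ℝ), (0:ℝ)) := by
  obtain ⟨p, hp⟩ := analyticAt_Phimp aPt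
  have hΦh : HasFPowerSeriesAt (⇑PhiH) p aPt := by rw [PhiH_coe]; exact hp
  have hp1 : p 1 = (continuousMultilinearCurryFin1 ℝ (ℝ × ℝ) (ℝ × ℝ)).symm
      (eEquiv : (ℝ × ℝ) →L[ℝ] (ℝ × ℝ)) := by
    have h := hp.hasFDerivAt.unique hasFDerivAt_Phimp
    rw [← h]
    simp
  have h := PhiH.hasFPowerSeriesAt_symm aPt_mem_source hΦh hp1
  rw [PhiH_aPt] at h
  exact ⟨_, h⟩

/-- The analytic root function. -/
def Vfun : ℝ → ℝ := fun x => (PhiH.symm (x, 0)).2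

lemma analyticAt_Vfun : AnalyticAt ℝ Vfun 0 := by
  have h1 : AnalyticAt ℝ (fun x : ℝ => ((x, (0:ℝ)) : ℝ × ℝ)) 0 :=
    analyticAt_id.prod analyticAt_const
  have h2 : AnalyticAt ℝ ((⇑PhiH.symm) ∘ (fun x : ℝ => ((x, (0:ℝ)) : ℝ × ℝ))) 0 :=
    AnalyticAt.comp analyticAt_symm h1
  exact AnalyticAt.comp analyticAt_snd h2

lemma Vfun_zero : Vfun 0 = Real.sqrt 2 / 2 := by
  have h : PhiH.symm ((0:ℝ), (0:ℝ)) = aPt := by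
    rw [← PhiH_aPt]; exact PhiH.left_inv aPt_mem_source
  simp only [Vfun, h, aPt]

lemma Vfun_spec {x : ℝ} (hx : ((x, (0:ℝ)) : ℝ × ℝ) ∈ PhiH.target) :
    Fimp (x, Vfun x) = 0 ∧ ((x, Vfun x) : ℝ × ℝ) ∈ PhiH.source := by
  have hq : PhiH (PhiH.symm (x, 0)) = (x, 0) := PhiH.right_inv hx
  rw [PhiH_coe] at hq
  have hq1 : (PhiH.symm ((x:ℝ), (0:ℝ))).1 = x := congrArg Prod.fst hq
  have hqeq : (PhiH.symm ((x:ℝ), (0:ℝ))) = (x, Vfun x) := Prod.ext hq1 rfl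
  constructor
  · have := congrArg Prod.snd hq
    rw [hqeq] at this
    exact this
  · rw [← hqeq]; exact PhiH.map_target hx

end RootLemmaClaim1Aux

lemma sqrt2_half_ge : (7:ℝ)/10 ≤ Real.sqrt 2 / 2 := by
  nlinarith [Real.sq_sqrt (show (0:ℝ) ≤ 2 by norm_num), Real.sqrt_nonneg 2]

lemma bound_aux1 {x W t : ℝ} (ht0 : 0 ≤ t) (ht1 : t < 1) (hW0 : 0 ≤ W)
    (htW : t = x ^ 4 * W) (h2W : 2 * W = (1 - t) * (1 + t) ^ 2) (hx4 : 0 < x ^ 4) :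
    W ≤ 1/2 + 3 * x ^ 4 ∧ 1/2 - 3 * x ^ 4 ≤ W := by
  have hW2 : W ≤ 2 := by nlinarith
  have htx : t ≤ 2 * x ^ 4 := by rw [htW]; nlinarith
  have ht2 : t ^ 2 ≤ t := by nlinarith
  have ht3 : t ^ 3 ≤ t := by nlinarith
  constructor
  · nlinarith
  · nlinarith

lemma bound_aux2 {v c W x : ℝ} (hvW : v ^ 2 = W) (hvnn : 0 ≤ v) (hc2 : c ^ 2 = 1/2)
    (hc7 : 7/10 ≤ c) (hx4 : 0 < x ^ 4)
    (hWub : W ≤ 1/2 + 3 * x ^ 4) (hWlb : 1/2 - 3 * x ^ 4 ≤ W) :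
    v - c ≤ 5 * x ^ 4 ∧ c - v ≤ 5 * x ^ 4 := by
  have hcpos : (0:ℝ) < c := lt_of_lt_of_le (by norm_num) hc7
  constructor
  · nlinarith [mul_nonneg (le_of_lt hx4) hvnn, mul_pos hx4 hcpos, sq_nonneg (v - c), sq_nonneg (v + c)]
  · nlinarith [mul_nonneg (le_of_lt hx4) hvnn, mul_pos hx4 hcpos, sq_nonneg (v - c), sq_nonneg (v + c)]


/-- Root lemma from the proof of Claim 1: the equation `2y² − (x² − y²)(x² + y²)² = 0` has,
near the origin, exactly the solutions `y = ±x³·V(x)` for an analytic unit `V` with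
`V(0) = √2 / 2`. -/
theorem root_lemma_claim1 :
    ∃ ε > (0 : ℝ), ∃ V : ℝ → ℝ,
      AnalyticOnNhd ℝ V (Set.Ioo (-ε) ε) ∧
      V 0 = Real.sqrt 2 / 2 ∧
      (∀ x ∈ Set.Ioo (-ε) ε,
        2 * (x ^ 3 * V x) ^ 2
          - (x ^ 2 - (x ^ 3 * V x) ^ 2) * (x ^ 2 + (x ^ 3 * V x) ^ 2) ^ 2 = 0) ∧
      ∃ ε' > (0 : ℝ), ε' ≤ ε ∧
        ∀ x y : ℝ, x ^ 2 + y ^ 2 < ε' ^ 2 →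
          2 * y ^ 2 - (x ^ 2 - y ^ 2) * (x ^ 2 + y ^ 2) ^ 2 = 0 →
          y = x ^ 3 * V x ∨ y = -(x ^ 3 * V x) := by
  obtain ⟨r₁, hr₁pos, hr₁⟩ : ∃ r > 0, ∀ z : ℝ, dist z 0 < r → AnalyticAt ℝ Vfun z := by
    have h := analyticAt_Vfun.eventually_analyticAt
    rw [Metric.eventually_nhds_iff] at h
    obtain ⟨r, hr, h⟩ := h
    exact ⟨r, hr, fun z hz => h hz⟩
  obtain ⟨r₂, hr₂pos, hr₂⟩ : ∃ r > 0, Metric.ball ((0:ℝ), (0:ℝ)) r ⊆ PhiH.target :=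
    Metric.isOpen_iff.1 PhiH.open_target _ zero_mem_target
  obtain ⟨δ, hδpos, hδ⟩ : ∃ d > 0, Metric.ball aPt d ⊆ PhiH.source :=
    Metric.isOpen_iff.1 PhiH.open_source _ aPt_mem_source
  have htarget : ∀ x : ℝ, |x| < r₂ → ((x, (0:ℝ)) : ℝ × ℝ) ∈ PhiH.target := by
    intro x hx
    apply hr₂
    rw [Metric.mem_ball, Prod.dist_eq, max_lt_iff]
    constructor
    · rwa [Real.dist_eq, sub_zero]
    · simpa using hr₂pos
  refine ⟨min r₁ r₂, lt_min hr₁pos hr₂pos, Vfun, ?_, Vfun_zero, ?_, ?_⟩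
  · intro z hz
    apply hr₁
    rw [Real.dist_eq, sub_zero]
    exact lt_of_lt_of_le (abs_lt.2 ⟨by linarith [hz.1], hz.2⟩) (min_le_left _ _)
  · intro x hx
    have hxr : |x| < r₂ :=
      lt_of_lt_of_le (abs_lt.2 ⟨by linarith [hx.1], hx.2⟩) (min_le_right _ _)
    have hF := (Vfun_spec (htarget x hxr)).1
    simp only [Fimp] at hF
    linear_combination (x ^ 6) * hF
  · refine ⟨min (min r₁ r₂) (min (δ/6) 1), by positivity, min_le_left _ _, ?_⟩
    set ε' := min (min r₁ r₂) (min (δ/6) 1) with hε'def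
    intro x y hxy heq
    have hε'pos : 0 < ε' := by positivity
    have hε'δ : ε' ≤ δ/6 := le_trans (min_le_right _ _) (min_le_left _ _)
    have hε'1 : ε' ≤ 1 := le_trans (min_le_right _ _) (min_le_right _ _)
    have hε'r : ε' ≤ min r₁ r₂ := min_le_left _ _
    have hxe : |x| < ε' := by
      nlinarith [sq_abs x, abs_nonneg x, sq_nonneg y]
    by_cases hx0 : x = 0
    · subst hx0
      have h2 : y ^ 2 ≤ 0 := by nlinarith [sq_nonneg y, sq_nonneg (y * y * y)]
      have hy : y = 0 := by
        have h0 : y ^ 2 = 0 := le_antisymm h2 (sq_nonneg y)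
        exact pow_eq_zero_iff (n := 2) (by norm_num) |>.1 h0
      left; simp [hy]
    · have hx2 : 0 < x ^ 2 := by positivity
      have hy0 : y ≠ 0 := by
        intro h; subst h
        have h6 : x ^ 6 = 0 := by linear_combination -heq
        exact hx0 (pow_eq_zero_iff (n := 6) (by norm_num) |>.1 h6)
      have hy2pos : 0 < y ^ 2 := by positivity
      have hyx : y ^ 2 < x ^ 2 := by
        by_contra h
        push_neg at h
        nlinarith [mul_nonneg (sub_nonneg.2 h) (sq_nonneg (x ^ 2 + y ^ 2))]
      -- auxiliary quantities
      have hx6 : (0:ℝ) < x ^ 6 := by positivity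
      have hx4 : (0:ℝ) < x ^ 4 := by positivity
      set v := |y| / |x| ^ 3 with hvdef
      set W := y ^ 2 / x ^ 6 with hWdef
      set t := y ^ 2 / x ^ 2 with htdef
      have hvW : v ^ 2 = W := by
        rw [hvdef, hWdef, div_pow, ← pow_mul]
        norm_num
        rw [← abs_pow, abs_of_nonneg (le_of_lt hx6)]
      have ht0 : 0 ≤ t := by positivity
      have ht1 : t < 1 := (div_lt_one hx2).2 hyx
      have htW : t = x ^ 4 * W := by rw [htdef, hWdef]; field_simp
      have h2W : 2 * W = (1 - t) * (1 + t) ^ 2 := by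
        rw [htdef, hWdef]
        field_simp
        linear_combination heq
      have hW0 : 0 ≤ W := by positivity
      have hy2W : y ^ 2 = x ^ 6 * W := by rw [hWdef]; field_simp
      have hvnn : 0 ≤ v := by positivity
      clear_value v W t
      obtain ⟨hWub, hWlb⟩ := bound_aux1 ht0 ht1 hW0 htW h2W hx4
      obtain ⟨hvc1, hvc2⟩ := bound_aux2 hvW hvnn sqrt2_half_sq sqrt2_half_ge hx4 hWub hWlb
      have habs1 : |x| ≤ 1 := le_of_lt (lt_of_lt_of_le hxe hε'1)
      have hxabs4 : x ^ 4 ≤ |x| := by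
        have h4 : x ^ 4 = |x| ^ 4 := by
          rw [← abs_pow, abs_of_nonneg (le_of_lt hx4)]
        rw [h4]
        calc |x| ^ 4 ≤ |x| ^ 1 := pow_le_pow_of_le_one (abs_nonneg x) habs1 (by norm_num)
        _ = |x| := pow_one _
      have hx4small : 5 * x ^ 4 < δ := by
        have : |x| < δ / 6 := lt_of_lt_of_le hxe hε'δ
        nlinarith
      have hmem : ((x, v) : ℝ × ℝ) ∈ PhiH.source := by
        apply hδ
        rw [Metric.mem_ball, Prod.dist_eq, max_lt_iff]
        constructor
        · show dist x aPt.1 < δ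
          rw [show aPt.1 = (0:ℝ) from rfl, Real.dist_eq, sub_zero]
          have : |x| < δ / 6 := lt_of_lt_of_le hxe hε'δ
          linarith
        · show dist v aPt.2 < δ
          rw [show aPt.2 = Real.sqrt 2 / 2 from rfl, Real.dist_eq]
          rw [abs_lt]
          constructor <;> linarith
      have hxr2 : |x| < r₂ :=
        lt_of_lt_of_le hxe (le_trans hε'r (min_le_right _ _))
      obtain ⟨hFVx, hVmem⟩ := Vfun_spec (htarget x hxr2)
      have hFv : Fimp (x, v) = 0 := by
        simp only [Fimp]
        rw [hvW, ← htW]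
        linear_combination h2W
      have hPhiv : PhiH ((x, v) : ℝ × ℝ) = (x, 0) := by
        rw [PhiH_coe]
        exact Prod.ext rfl hFv
      have hPhiVx : PhiH ((x, Vfun x) : ℝ × ℝ) = (x, 0) := by
        rw [PhiH_coe]
        exact Prod.ext rfl hFVx
      have hinj := PhiH.injOn hmem hVmem (hPhiv.trans hPhiVx.symm)
      have hvV : v = Vfun x := congrArg Prod.snd hinj
      have hyv2 : y ^ 2 = (x ^ 3 * Vfun x) ^ 2 := by
        have h1 : y ^ 2 = x ^ 6 * v ^ 2 := by rw [hvW]; exact hy2W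
        rw [hvV] at h1
        linear_combination h1
      have hfac : (y - x ^ 3 * Vfun x) * (y + x ^ 3 * Vfun x) = 0 := by
        linear_combination hyv2
      rcases mul_eq_zero.1 hfac with h | h
      · left; linarith
      · right; linarith
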